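/- Let G be a countable group and A a finite alphabet. Let τ : A^G → A^G be a stably injective NUCA with finite memory. Then the following are equivalent: (i) τ is surjective; (ii) τ is invertible; (iii) τ is stably invertible. -/
import Mathlib


open Function Set Pointwise

section Defs

variable {G A S : Type*} [Group G]

/-- The NUCA `σ_s : A^G → A^G` determined by the configuration of local
defining maps `s ∈ S^G`, `S = A^(A^M)`:
`σ_s(x)(g) = s(g)((g⁻¹x)|_M)` where `(g⁻¹x)(h) = x(gh)`. -/
def nuca {M : Finset G} (s : G → ((M → A) → A)) : (G → A) → (G → A) :=
  fun x g => s g fun m => x (g * (m : G))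

/-- The closure, in the prodiscrete topology on `S^G`, of the shift orbit
`{gs : g ∈ G}`, where `(gs)(h) = s(g⁻¹h)`. -/
def orbitClosure (s : G → S) : Set (G → S) :=
  @closure (G → S) (@Pi.topologicalSpace G (fun _ => S) fun _ => ⊥)
    {p | ∃ g : G, p = fun h => s (g⁻¹ * h)}

/-- `τ` is a NUCA with finite memory. -/
def IsNUCAFin (τ : (G → A) → (G → A)) : Prop :=
  ∃ (M : Finset G) (s : G → ((M → A) → A)), τ = nuca s

/-- `τ` is invertible: it is bijective and its inverse is a NUCA with finite memory. -/
def IsInvertibleNUCA (τ : (G → A) → (G → A)) : Prop :=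
  Function.Bijective τ ∧ ∃ ρ : (G → A) → (G → A), IsNUCAFin ρ ∧
    Function.LeftInverse ρ τ ∧ Function.RightInverse ρ τ

/-- `σ_s` is stably injective: `σ_p` is injective for every `p ∈ Σ(s)`. -/
def StablyInjective {M : Finset G} (s : G → ((M → A) → A)) : Prop :=
  ∀ p ∈ orbitClosure s, Function.Injective (nuca p)

/-- `σ_s` is stably invertible. -/
def StablyInvertible {M : Finset G} (s : G → ((M → A) → A)) : Prop :=
  ∃ (N : Finset G) (t : G → ((N → A) → A)),
    ∀ p ∈ orbitClosure s, ∃ q ∈ orbitClosure t,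
      nuca p ∘ nuca q = id ∧ nuca q ∘ nuca p = id

/-- Two configurations are asymptotic if they agree outside a finite set. -/
def Asymptotic (x y : G → S) : Prop :=
  ∃ Ω : Finset G, ∀ g ∉ Ω, x g = y g

/-- `s` is asymptotically constant. -/
def AsymptoticallyConstant (s : G → S) : Prop :=
  ∃ c : S, Asymptotic s fun _ => c

/-- `τ` is pre-injective. -/
def PreInjective (τ : (G → A) → (G → A)) : Prop :=
  ∀ x y : G → A, Asymptotic x y → τ x = τ y → x = y

/-- `τ` is post-surjective. -/
def PostSurjective (τ : (G → A) → (G → A)) : Prop :=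
  ∀ x y : G → A, Asymptotic y (τ x) → ∃ z : G → A, Asymptotic z x ∧ τ z = y

/-- `σ_s` is stably post-surjective: `σ_p` is post-surjective for all `p ∈ Σ(s)`. -/
def StablyPostSurjective {M : Finset G} (s : G → ((M → A) → A)) : Prop :=
  ∀ p ∈ orbitClosure s, PostSurjective (nuca p)

/-- `τ` is a cellular automaton: a NUCA with finite memory and a constant
configuration of local defining maps. -/
def IsCellularAutomaton (τ : (G → A) → (G → A)) : Prop :=
  ∃ (M : Finset G) (μ : (M → A) → A), τ = nuca fun _ : G => μ

/-- `G` is surjunctive: over every finite alphabet, injective CA are surjective. -/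
def Surjunctive (G : Type*) [Group G] : Prop :=
  ∀ (B : Type) [Fintype B] (τ : (G → B) → (G → B)),
    IsCellularAutomaton τ → Function.Injective τ → Function.Surjective τ

/-- `G` is post-injunctive: over every finite alphabet, post-surjective CA are
pre-injective. -/
def PostInjunctive (G : Type*) [Group G] : Prop :=
  ∀ (B : Type) [Fintype B] (τ : (G → B) → (G → B)),
    IsCellularAutomaton τ → PostSurjective τ → PreInjective τ

/-- `s` has uniformly bounded singularity: for every finite symmetric `E ∋ 1`
there is a finite `F ⊇ E` such that `s` is constant on `FE ∖ F`. -/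
def UniformlyBoundedSingularity (s : G → S) : Prop :=
  ∀ E : Finset G, (1 : G) ∈ E → (∀ g ∈ E, g⁻¹ ∈ E) →
    ∃ F : Finset G, E ⊆ F ∧ ∃ c : S,
      ∀ g ∈ ((F : Set G) * (E : Set G)) \ (F : Set G), s g = c

end Defs


section Aux
variable {G : Type*} [Group G]

private lemma mem_orbitClosure_iff' {S : Type*} {s p : G → S} :
    p ∈ orbitClosure s ↔ ∀ F : Finset G, ∃ g : G, ∀ h ∈ F, p h = s (g⁻¹ * h) := by
  letI : TopologicalSpace S := ⊥
  haveI : DiscreteTopology S := ⟨rfl⟩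
  show p ∈ closure {p | ∃ g : G, p = fun h => s (g⁻¹ * h)} ↔ _
  rw [mem_closure_iff]
  constructor
  · intro H F
    obtain ⟨r, hrO, g, rfl⟩ := H ((F : Set G).pi (fun h => {p h}))
      (isOpen_set_pi F.finite_toSet (fun _ _ => isOpen_discrete _))
      (fun h _ => rfl)
    exact ⟨g, fun h hh => (hrO h hh).symm⟩
  · intro H O hO hpO
    obtain ⟨I, u, hu, hsub⟩ := isOpen_pi_iff.mp hO p hpO
    obtain ⟨g, hg⟩ := H I
    refine ⟨fun h => s (g⁻¹ * h), hsub fun a ha => ?_, g, rfl⟩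
    rw [← hg a ha]
    exact (hu a ha).2

private lemma orbit_mem_orbitClosure {S : Type*} (s : G → S) (g : G) :
    (fun h => s (g⁻¹ * h)) ∈ orbitClosure s :=
  mem_orbitClosure_iff'.mpr fun _ => ⟨g, fun _ _ => rfl⟩

private lemma self_mem_orbitClosure {S : Type*} (s : G → S) : s ∈ orbitClosure s := by
  have := orbit_mem_orbitClosure s 1
  simpa using this

private lemma shift_mem_orbitClosure {S : Type*} {s p : G → S}
    (hp : p ∈ orbitClosure s) (g : G) :
    (fun h => p (g * h)) ∈ orbitClosure s := by
  classical
  rw [mem_orbitClosure_iff'] at hp ⊢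
  intro F
  obtain ⟨g₁, hg₁⟩ := hp (F.image (g * ·))
  refine ⟨g⁻¹ * g₁, fun h hh => ?_⟩
  have := hg₁ (g * h) (Finset.mem_image_of_mem _ hh)
  simpa [mul_assoc] using this

private lemma compactness_seq {B : Type*} [Finite B] (C : ℕ → Set (G → B)) (D : ℕ → Finset G)
    (hmono : ∀ n, C (n+1) ⊆ C n) (hne : ∀ n, (C n).Nonempty)
    (hdet : ∀ n, ∀ x ∈ C n, ∀ y : G → B, (∀ g ∈ D n, y g = x g) → y ∈ C n) :
    ∃ x, ∀ n, x ∈ C n := by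
  letI : TopologicalSpace B := ⊥
  haveI : DiscreteTopology B := ⟨rfl⟩
  have hcl : ∀ n, IsClosed (C n) := by
    intro n
    rw [← isOpen_compl_iff, isOpen_iff_forall_mem_open]
    intro x hx
    refine ⟨(D n : Set G).pi (fun g => {x g}), ?_,
      isOpen_set_pi (D n).finite_toSet (fun _ _ => isOpen_discrete _), fun g _ => rfl⟩
    intro y hy hyC
    exact hx (hdet n y hyC x (fun g hg => (hy g hg).symm))
  have := IsCompact.nonempty_iInter_of_sequence_nonempty_isCompact_isClosed C hmono hne
    ((hcl 0).isCompact) hcl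
  obtain ⟨x, hx⟩ := this
  exact ⟨x, fun n => Set.mem_iInter.mp hx n⟩

private lemma exists_exhaustion (G : Type*) [Group G] [Countable G] :
    ∃ E : ℕ → Finset G, (∀ n, E n ⊆ E (n+1)) ∧ (∀ F : Finset G, ∃ n, F ⊆ E n) := by
  classical
  haveI : Nonempty G := ⟨1⟩
  obtain ⟨f, hf⟩ := exists_surjective_nat G
  refine ⟨fun n => (Finset.range (n+1)).image f, fun n =>
    Finset.image_subset_image (Finset.range_subset_range.mpr (by omega)), fun F => ?_⟩
  refine ⟨F.sup (fun g => (hf g).choose), fun g hg => Finset.mem_image.mpr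
    ⟨(hf g).choose, Finset.mem_range.mpr (Nat.lt_succ_of_le (Finset.le_sup (f := fun g => (hf g).choose) hg)), (hf g).choose_spec⟩⟩

end Aux
section Aux2
variable {G : Type*} [Group G] [Countable G] {A : Type*} [Fintype A] {M : Finset G}

private lemma surj_of_mem {s p : G → ((M → A) → A)}
    (hs : Surjective (nuca s)) (hp : p ∈ orbitClosure s) :
    Surjective (nuca p) := by
  classical
  intro y
  obtain ⟨E, hEmono, hEcov⟩ := exists_exhaustion G
  set C : ℕ → Set (G → A) := fun n => {x | ∀ g ∈ E n, nuca p x g = y g} with hC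
  have hmono : ∀ n, C (n+1) ⊆ C n := fun n x hx g hg => hx g (hEmono n hg)
  have hdet : ∀ n, ∀ x ∈ C n, ∀ x' : G → A,
      (∀ g ∈ (E n).biUnion (fun g => M.image (g * ·)), x' g = x g) → x' ∈ C n := by
    intro n x hx x' hagree g hg
    have : nuca p x' g = nuca p x g := by
      unfold nuca
      congr 1
      funext m
      exact hagree _ (Finset.mem_biUnion.mpr ⟨g, hg, Finset.mem_image.mpr ⟨m, m.2, rfl⟩⟩)
    rw [this]; exact hx g hg
  have hne : ∀ n, (C n).Nonempty := by
    intro n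
    obtain ⟨g₀, hg₀⟩ := mem_orbitClosure_iff'.mp hp (E n)
    obtain ⟨z, hz⟩ := hs (fun k => y (g₀ * k))
    refine ⟨fun h => z (g₀⁻¹ * h), fun g hg => ?_⟩
    have : nuca p (fun h => z (g₀⁻¹ * h)) g = nuca s z (g₀⁻¹ * g) := by
      unfold nuca
      rw [hg₀ g hg]
      congr 1
      funext m
      simp [mul_assoc]
    rw [this, hz]
    simp
  obtain ⟨x, hx⟩ := compactness_seq C _ hmono hne hdet
  refine ⟨x, funext fun g => ?_⟩
  obtain ⟨n, hn⟩ := hEcov {g}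
  exact hx n g (hn (Finset.mem_singleton_self g))

private lemma uniform_inj {s : G → ((M → A) → A)}
    (hinj : ∀ p ∈ orbitClosure s, Function.Injective (nuca p)) :
    ∃ N : Finset G, ∀ p ∈ orbitClosure s, ∀ x y : G → A,
      (∀ g ∈ N, nuca p x g = nuca p y g) → x 1 = y 1 := by
  classical
  by_contra hcon
  push_neg at hcon
  obtain ⟨E, hEmono, hEcov⟩ := exists_exhaustion G
  set B := ((M → A) → A) × A × A with hB
  set D : ℕ → Finset G := fun n =>
    (E n ∪ (E n).biUnion (fun g => M.image (g * ·))) ∪ {1} with hD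
  have hDmono : ∀ n, D n ⊆ D (n+1) := by
    intro n
    apply Finset.union_subset_union_left
    exact Finset.union_subset_union (hEmono n)
      (Finset.biUnion_subset_biUnion_of_subset_left _ (hEmono n))
  set C : ℕ → Set (G → B) := fun n => {w |
    (∃ g : G, ∀ h ∈ D n, (w h).1 = s (g⁻¹ * h)) ∧
    (∀ g ∈ E n, nuca (fun h => (w h).1) (fun h => (w h).2.1) g
      = nuca (fun h => (w h).1) (fun h => (w h).2.2) g) ∧
    (w 1).2.1 ≠ (w 1).2.2} with hC
  have hmono : ∀ n, C (n+1) ⊆ C n := by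
    rintro n w ⟨⟨g, hg⟩, h2, h3⟩
    exact ⟨⟨g, fun h hh => hg h (hDmono n hh)⟩, fun g hg => h2 g (hEmono n hg), h3⟩
  have hdet : ∀ n, ∀ w ∈ C n, ∀ w' : G → B, (∀ g ∈ D n, w' g = w g) → w' ∈ C n := by
    rintro n w ⟨⟨g, hg⟩, h2, h3⟩ w' hagree
    have hE : ∀ g ∈ E n, g ∈ D n := fun g hg =>
      Finset.mem_union_left _ (Finset.mem_union_left _ hg)
    have hEM : ∀ g ∈ E n, ∀ m : M, g * (m : G) ∈ D n := fun g hg m =>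
      Finset.mem_union_left _ (Finset.mem_union_right _
        (Finset.mem_biUnion.mpr ⟨g, hg, Finset.mem_image.mpr ⟨m, m.2, rfl⟩⟩))
    have h1' : 1 ∈ D n := Finset.mem_union_right _ (Finset.mem_singleton_self 1)
    refine ⟨⟨g, fun h hh => by rw [hagree h hh]; exact hg h hh⟩, ?_, ?_⟩
    · intro g hg
      have e1 : nuca (fun h => (w' h).1) (fun h => (w' h).2.1) g
          = nuca (fun h => (w h).1) (fun h => (w h).2.1) g := by
        unfold nuca
        show (w' g).1 (fun m => (w' (g * (m:G))).2.1) = (w g).1 (fun m => (w (g * (m:G))).2.1)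
        rw [hagree g (hE g hg)]
        exact congrArg _ (funext fun m => congrArg (fun b : B => b.2.1) (hagree _ (hEM g hg m)))
      have e2 : nuca (fun h => (w' h).1) (fun h => (w' h).2.2) g
          = nuca (fun h => (w h).1) (fun h => (w h).2.2) g := by
        unfold nuca
        show (w' g).1 (fun m => (w' (g * (m:G))).2.2) = (w g).1 (fun m => (w (g * (m:G))).2.2)
        rw [hagree g (hE g hg)]
        exact congrArg _ (funext fun m => congrArg (fun b : B => b.2.2) (hagree _ (hEM g hg m)))
      rw [e1, e2]; exact h2 g hg
    · rw [hagree 1 h1']; exact h3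
  have hne : ∀ n, (C n).Nonempty := by
    intro n
    obtain ⟨p, hp, x, y, hxy, hne1⟩ := hcon (E n)
    obtain ⟨g, hg⟩ := mem_orbitClosure_iff'.mp hp (D n)
    exact ⟨fun h => (p h, x h, y h), ⟨g, hg⟩, hxy, hne1⟩
  obtain ⟨w, hw⟩ := compactness_seq C D hmono hne hdet
  set p : G → ((M → A) → A) := fun h => (w h).1 with hp'
  have hp : p ∈ orbitClosure s := by
    rw [mem_orbitClosure_iff']
    intro F
    obtain ⟨n, hn⟩ := hEcov F
    obtain ⟨g, hg⟩ := (hw n).1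
    exact ⟨g, fun h hh => hg h (Finset.mem_union_left _ (Finset.mem_union_left _ (hn hh)))⟩
  have heq : nuca p (fun h => (w h).2.1) = nuca p (fun h => (w h).2.2) := by
    funext g
    obtain ⟨n, hn⟩ := hEcov {g}
    exact (hw n).2.1 g (hn (Finset.mem_singleton_self g))
  have := congrFun (hinj p hp heq) 1
  exact (hw 0).2.2 this

end Aux2
section Aux3
variable {G : Type*} [Group G] [Countable G] {A : Type*} [Fintype A] [Nonempty A] {M : Finset G}

open scoped Classical in
private noncomputable def qmap' (N : Finset G) (p : G → ((M → A) → A)) :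
    G → ((N → A) → A) := fun g c =>
  if h : ∃ x : G → A, ∀ n : N, nuca p x (g * n) = c n then h.choose g
  else Classical.ofNonempty

variable {s : G → ((M → A) → A)} {N : Finset G}

/-- abbreviation for the uniform injectivity property -/
private def UInj (s : G → ((M → A) → A)) (N : Finset G) : Prop :=
  ∀ p ∈ orbitClosure s, ∀ x y : G → A, (∀ g ∈ N, nuca p x g = nuca p y g) → x 1 = y 1

private lemma qmap_spec (hN : UInj s N) {p : G → ((M → A) → A)} (hp : p ∈ orbitClosure s)
    (g : G) (c : N → A) (x : G → A)
    (hx : ∀ n : N, nuca p x (g * n) = c n) : qmap' N p g c = x g := by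
  classical
  have hex : ∃ x : G → A, ∀ n : N, nuca p x (g * n) = c n := ⟨x, hx⟩
  rw [qmap', dif_pos hex]
  set x' := hex.choose with hx'
  have hx'spec := hex.choose_spec
  have key := hN (fun h => p (g * h)) (shift_mem_orbitClosure hp g)
    (fun k => x' (g * k)) (fun k => x (g * k)) ?_
  · simpa using key
  · intro n hn
    have e : ∀ z : G → A, nuca (fun h => p (g * h)) (fun k => z (g * k)) n
        = nuca p z (g * n) := by
      intro z
      unfold nuca
      simp [mul_assoc]
    rw [e, e, hx'spec ⟨n, hn⟩, hx ⟨n, hn⟩]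

private lemma exists_ext (N : Finset G) (g : G) (c : N → A) :
    ∃ y : G → A, ∀ n : N, y (g * n) = c n := by
  classical
  refine ⟨fun h => if hh : ∃ n : N, g * (n : G) = h then c hh.choose
    else Classical.ofNonempty, fun n => ?_⟩
  have hex : ∃ n' : N, g * (n' : G) = g * (n : G) := ⟨n, rfl⟩
  show (if hh : ∃ n' : N, g * (n' : G) = g * (n : G) then c hh.choose
    else Classical.ofNonempty) = c n
  rw [dif_pos hex]
  congr 1
  exact Subtype.ext (mul_left_cancel hex.choose_spec)

private lemma exists_preimage_pattern (hs : Surjective (nuca s)) {p : G → ((M → A) → A)}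
    (hp : p ∈ orbitClosure s) (g : G) (c : N → A) :
    ∃ x : G → A, ∀ n : N, nuca p x (g * n) = c n := by
  obtain ⟨y, hy⟩ := exists_ext N g c
  obtain ⟨x, hx⟩ := surj_of_mem hs hp y
  exact ⟨x, fun n => by rw [hx]; exact hy n⟩

private lemma qmap_congr (hs : Surjective (nuca s)) (hN : UInj s N)
    {p p' : G → ((M → A) → A)} (hp : p ∈ orbitClosure s) (hp' : p' ∈ orbitClosure s)
    (g : G) (hagree : ∀ n : N, p (g * n) = p' (g * n)) :
    qmap' N p g = qmap' N p' g := by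
  funext c
  obtain ⟨x, hx⟩ := exists_preimage_pattern hs hp g c
  have hx' : ∀ n : N, nuca p' x (g * n) = c n := by
    intro n
    rw [← hx n]
    unfold nuca
    rw [hagree n]
  rw [qmap_spec hN hp g c x hx, qmap_spec hN hp' g c x hx']

private lemma qmap_equivariant (hs : Surjective (nuca s)) (hN : UInj s N)
    {p : G → ((M → A) → A)} (hp : p ∈ orbitClosure s) (g₀ g : G) :
    qmap' N (fun h => p (g₀ * h)) g = qmap' N p (g₀ * g) := by
  funext c
  obtain ⟨x, hx⟩ := exists_preimage_pattern hs hp (g₀ * g) c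
  have hx' : ∀ n : N, nuca (fun h => p (g₀ * h)) (fun k => x (g₀ * k)) (g * n) = c n := by
    intro n
    rw [← hx n]
    unfold nuca
    simp [mul_assoc]
  rw [qmap_spec hN (shift_mem_orbitClosure hp g₀) g c _ hx',
    qmap_spec hN hp (g₀ * g) c x hx]

end Aux3

section Main
variable {G : Type*} [Group G] [Countable G] {A : Type*} [Fintype A] {M : Finset G}

private lemma stablyInvertible_of_surjective [Nonempty A] (s : G → ((M → A) → A))
    (hinj : StablyInjective s) (hs : Surjective (nuca s)) : StablyInvertible s := by
  classical
  obtain ⟨N, hN⟩ := uniform_inj hinj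
  have hN : UInj s N := hN
  refine ⟨N, qmap' N s, fun p hp => ?_⟩
  have lid : ∀ x : G → A, nuca (qmap' N p) (nuca p x) = x := by
    intro x
    funext g
    exact qmap_spec hN hp g (fun n => nuca p x (g * n)) x (fun n => rfl)
  refine ⟨qmap' N p, ?_, ?_, ?_⟩
  · rw [mem_orbitClosure_iff']
    intro F
    obtain ⟨g₀, hg₀⟩ := mem_orbitClosure_iff'.mp hp (F.biUnion (fun h => N.image (h * ·)))
    refine ⟨g₀, fun h hh => ?_⟩
    have e1 : qmap' N p h = qmap' N (fun k => s (g₀⁻¹ * k)) h := by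
      apply qmap_congr hs hN hp (orbit_mem_orbitClosure s g₀) h
      intro n
      exact hg₀ (h * n) (Finset.mem_biUnion.mpr ⟨h, hh, Finset.mem_image.mpr ⟨n, n.2, rfl⟩⟩)
    have e2 : qmap' N (fun k => s (g₀⁻¹ * k)) h = qmap' N s (g₀⁻¹ * h) :=
      qmap_equivariant hs hN (self_mem_orbitClosure s) g₀⁻¹ h
    rw [e1, e2]
  · funext y
    obtain ⟨x, rfl⟩ := surj_of_mem hs hp y
    show nuca p (nuca (qmap' N p) (nuca p x)) = nuca p x
    rw [lid x]
  · funext x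
    exact lid x

private lemma invertible_of_stablyInvertible (s : G → ((M → A) → A))
    (hst : StablyInvertible s) : IsInvertibleNUCA (nuca s) := by
  obtain ⟨N, t, h⟩ := hst
  obtain ⟨q, hq, h1, h2⟩ := h s (self_mem_orbitClosure s)
  have li : Function.LeftInverse (nuca q) (nuca s) := fun x => congrFun h2 x
  have ri : Function.RightInverse (nuca q) (nuca s) := fun x => congrFun h1 x
  exact ⟨⟨li.injective, ri.surjective⟩, nuca q, ⟨N, q, rfl⟩, li, ri⟩

end Main


theorem stablyInjective_surjective_iff_invertible_iff_stablyInvertible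
    {G A : Type*} [Group G] [Countable G] [Fintype A]
    {M : Finset G} (s : G → ((M → A) → A))
    (hinj : StablyInjective s) :
    (Function.Surjective (nuca s) ↔ IsInvertibleNUCA (nuca s)) ∧
    (IsInvertibleNUCA (nuca s) ↔ StablyInvertible s) := by
  classical
  rcases isEmpty_or_nonempty A with hA | hA
  · haveI : Subsingleton (G → A) := ⟨fun f g => funext fun x => (hA.false (f x)).elim⟩
    have hsurj : Function.Surjective (nuca s) := fun y => ⟨y, Subsingleton.elim _ _⟩
    have hinv : IsInvertibleNUCA (nuca s) :=
      ⟨⟨fun a b _ => Subsingleton.elim a b, hsurj⟩, nuca s, ⟨M, s, rfl⟩,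
        fun x => Subsingleton.elim _ _, fun x => Subsingleton.elim _ _⟩
    have hstab : StablyInvertible s :=
      ⟨M, s, fun p hp => ⟨p, hp, funext fun x => Subsingleton.elim _ _,
        funext fun x => Subsingleton.elim _ _⟩⟩
    exact ⟨⟨fun _ => hinv, fun _ => hsurj⟩, ⟨fun _ => hstab, fun _ => hinv⟩⟩
  · have key : Function.Surjective (nuca s) → StablyInvertible s :=
      fun h => stablyInvertible_of_surjective s hinj h
    have B := invertible_of_stablyInvertible s
    exact ⟨⟨fun h => B (key h), fun h => h.1.2⟩, ⟨fun h => key h.1.2, B⟩⟩
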